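/- Define (k−1)/k·n-delete Nim with n = km heaps (k ≥ 2, m ≥ 1): positions are sorted vectors z₁ ≤ ⋯ ≤ z_{km} of positive integers; a move deletes (k−1)m heaps and splits each of the remaining m heaps into k positive parts. Let k^s be the smallest power of k strictly greater than z_{(k−1)m+1}. With P-positions defined inductively, the position is a P-position if and only if (a) z₁,…,z_{(k−1)m+1} are all k-oddoid, and (b) every k-evenoid z_l satisfies z_l ≥ k^s. -/

import Mathlib

inductive NPos {α : Type*} (Move : α → α → Prop) : α → Prop
  | intro {p q : α} : Move p q → (∀ r, Move q r → NPos Move r) → NPos Move p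

def PPos {α : Type*} (Move : α → α → Prop) (p : α) : Prop :=
  ∀ q, Move p q → NPos Move q

/-- A positive integer is `k`-oddoid if its remainder modulo `k * (k - 1)`
lies between `1` and `k - 1` (inclusive); otherwise it is `k`-evenoid. -/
def Oddoid (k x : ℕ) : Prop :=
  1 ≤ x % (k * (k - 1)) ∧ x % (k * (k - 1)) ≤ k - 1

/-- A move of `(k-1)/k·n`-delete Nim with `n = k * m` heaps: delete
`(k - 1) * m` heaps (`d`) and split each of the remaining `m` heaps into `k`
positive parts; `L` records, for each remaining heap, the multiset of its
`k` parts (the original heap being their sum). -/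
def KDelMove (k m : ℕ) (p q : Multiset ℕ) : Prop :=
  ∃ (d : Multiset ℕ) (L : Multiset (Multiset ℕ)),
    Multiset.card d = (k - 1) * m ∧ Multiset.card L = m ∧
    (∀ P ∈ L, Multiset.card P = k ∧ ∀ x ∈ P, 0 < x) ∧
    p = d + L.map Multiset.sum ∧
    q = L.join

namespace DelNim

section Prelims
variable {k : ℕ} (hk : 2 ≤ k)

include hk

lemma n_ge : 2 ≤ k * (k-1) := by
  have h1 : 1 ≤ k - 1 := by omega
  calc 2 ≤ k * 1 := by omega
  _ ≤ k * (k-1) := Nat.mul_le_mul_left _ h1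

lemma oddoid_of_small {x : ℕ} (h1 : 1 ≤ x) (h2 : x ≤ k - 1) : Oddoid k x := by
  have : x < k * (k-1) := by nlinarith [n_ge hk]
  constructor <;> rw [Nat.mod_eq_of_lt this] <;> omega

lemma evenoid_ge {x : ℕ} (h0 : 0 < x) (he : ¬ Oddoid k x) : k ≤ x := by
  by_contra h
  exact he (oddoid_of_small hk h0 (by omega))

lemma n_dvd_pow_sub {s : ℕ} (hs : 1 ≤ s) : k * (k-1) ∣ k ^ s - k := by
  obtain ⟨t, rfl⟩ : ∃ t, s = t + 1 := ⟨s - 1, by omega⟩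
  have h1 : (k - 1) ∣ k ^ t - 1 := by
    simpa using Nat.sub_dvd_pow_sub_pow k 1 t
  obtain ⟨c, hc⟩ := h1
  have hk1 : 1 ≤ k ^ t := Nat.one_le_pow _ _ (by omega)
  have : k ^ (t+1) - k = k * (k ^ t - 1) := by
    rw [Nat.mul_sub, pow_succ, mul_comm (k^t) k, mul_one]
  rw [this, hc, ← mul_assoc]
  exact Dvd.intro c rfl

/-- an evenoid below `k^s` is at most `k^s - k`. -/
lemma evenoid_le_pow_sub {x s : ℕ} (hs : 1 ≤ s) (h0 : 0 < x) (he : ¬ Oddoid k x)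
    (hx : x < k ^ s) : x ≤ k ^ s - k := by
  by_contra h
  have hks : k ≤ k ^ s := Nat.le_self_pow (by omega) k
  obtain ⟨c, hc⟩ := n_dvd_pow_sub hk hs
  set u := x - (k^s - k) with hu
  have hux : x = k * (k-1) * c + u := by omega
  have hu1 : 1 ≤ u := by omega
  have hu2 : u ≤ k - 1 := by omega
  apply he
  have := oddoid_of_small hk hu1 hu2
  have hmod : x % (k * (k-1)) = u % (k * (k-1)) := by rw [hux, Nat.mul_add_mod]
  rwa [Oddoid, hmod]

/-- gap lemma : an oddoid that is `≥ k^j` is `≥ k^j + (k-1)`. -/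
lemma oddoid_pow_gap {y j : ℕ} (hj : 1 ≤ j) (hy : Oddoid k y) (h : k ^ j ≤ y) :
    k ^ j + (k - 1) ≤ y := by
  by_contra h2
  obtain ⟨c, hc⟩ := n_dvd_pow_sub hk hj
  have hks : k ≤ k ^ j := Nat.le_self_pow (by omega) k
  set t := y - k ^ j with ht
  have htk : t ≤ k - 2 := by omega
  have hyy : y = k * (k-1) * c + (k + t) := by omega
  have hmod : y % (k * (k-1)) = (k + t) % (k * (k-1)) := by
    rw [hyy, Nat.mul_add_mod]
  obtain ⟨h1, h2'⟩ := hy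
  rw [hmod] at h1 h2'
  have hnn : 2 * (k-1) ≤ k * (k-1) := Nat.mul_le_mul_right _ hk
  rcases lt_or_ge (k + t) (k * (k-1)) with hlt | hge
  · rw [Nat.mod_eq_of_lt hlt] at h2'; omega
  · have : (k+t) % (k * (k-1)) = k + t - k * (k-1) := by
      rw [Nat.mod_eq_sub_mod hge, Nat.mod_eq_of_lt (by omega)]
    rw [this] at h1 h2'
    omega

/-- subtracting `k-1` from an oddoid `≥ k` gives an evenoid. -/
lemma oddoid_sub_evenoid {y : ℕ} (hy : Oddoid k y) (hky : k ≤ y) :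
    ¬ Oddoid k (y - (k-1)) := by
  obtain ⟨h1, h2⟩ := hy
  have hdm := Nat.div_add_mod y (k * (k-1))
  have hnn : 2 * (k-1) ≤ k * (k-1) := Nat.mul_le_mul_right _ hk
  rcases eq_or_lt_of_le h2 with he | hlt
  · -- r = k - 1
    have hsub : y - (k-1) = k * (k-1) * (y / (k * (k-1))) := by omega
    rintro ⟨ha, hb⟩
    rw [hsub, Nat.mul_mod_right] at ha
    omega
  · -- r < k - 1 : then q ≥ 1 since y ≥ k > r
    obtain ⟨q', hq'⟩ : ∃ q', y / (k * (k-1)) = q' + 1 := by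
      rcases Nat.eq_zero_or_pos (y / (k * (k-1))) with h0 | h0
      · exfalso; rw [h0] at hdm; omega
      · exact ⟨y / (k * (k-1)) - 1, by omega⟩
    rw [hq', Nat.mul_add, Nat.mul_one] at hdm
    have hsub : y - (k-1) = k * (k-1) * q' + (k * (k-1) - (k-1) + y % (k * (k-1))) := by
      omega
    rintro ⟨ha, hb⟩
    rw [hsub, Nat.mul_add_mod, Nat.mod_eq_of_lt (by omega)] at ha hb
    omega

/-- the sum of `k` oddoids is evenoid. -/
lemma sum_oddoid_evenoid {P : Multiset ℕ} (hcard : Multiset.card P = k)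
    (hodd : ∀ x ∈ P, Oddoid k x) : ¬ Oddoid k P.sum := by
  set R := (P.map (· % (k * (k-1)))).sum with hR
  have hsum : P.sum % (k * (k-1)) = R % (k * (k-1)) := Multiset.sum_nat_mod _ _
  have hlb : k ≤ R := by
    have h := Multiset.card_nsmul_le_sum (s := P.map (· % (k * (k-1)))) (a := 1)
      (fun x hx => by
        obtain ⟨y, hy, rfl⟩ := Multiset.mem_map.1 hx
        exact (hodd y hy).1)
    simpa [hcard] using h
  have hub : R ≤ k * (k - 1) := by
    have h := Multiset.sum_le_card_nsmul (P.map (· % (k * (k-1)))) (k-1)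
      (fun x hx => by
        obtain ⟨y, hy, rfl⟩ := Multiset.mem_map.1 hx
        exact (hodd y hy).2)
    rw [Multiset.card_map, hcard, smul_eq_mul] at h
    omega
  rintro ⟨h1, h2⟩
  rw [hsum] at h1 h2
  rcases eq_or_lt_of_le hub with he | hlt
  · rw [he, Nat.mod_self] at h1; omega
  · rw [Nat.mod_eq_of_lt hlt] at h1 h2; omega

end Prelims

section Splits

lemma exists_list_sum (B : ℕ) : ∀ (j Q : ℕ), Q ≤ j * B →
    ∃ c : List ℕ, c.length = j ∧ (∀ x ∈ c, x ≤ B) ∧ c.sum = Q := by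
  intro j
  induction j with
  | zero =>
    intro Q hQ
    refine ⟨[], rfl, by simp, ?_⟩
    simp only [List.sum_nil]
    omega
  | succ j ih =>
    intro Q hQ
    have h1 : min B Q ≤ B := Nat.min_le_left _ _
    have h2 : min B Q ≤ Q := Nat.min_le_right _ _
    have hm : Q - min B Q ≤ j * B := by
      have h3 : Q ≤ j * B + B := by rw [Nat.succ_mul] at hQ; omega
      rcases Nat.le_total B Q with h | h
      · rw [Nat.min_eq_left h]; omega
      · rw [Nat.min_eq_right h]; omega
    obtain ⟨c, hc1, hc2, hc3⟩ := ih _ hm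
    refine ⟨min B Q :: c, by simp [hc1], ?_, ?_⟩
    · intro x hx
      rcases List.mem_cons.1 hx with rfl | hx
      · exact h1
      · exact hc2 _ hx
    · simp only [List.sum_cons, hc3]
      omega

lemma exists_residues {k : ℕ} (hk : 2 ≤ k) {T : ℕ} (hT1 : k ≤ T) (hT2 : T ≤ k * (k-1)) :
    ∃ r : List ℕ, r.length = k ∧ (∀ x ∈ r, 1 ≤ x ∧ x ≤ k - 1) ∧ r.sum = T := by
  have h2k : 2 * k ≤ k * k := by nlinarith
  have he : k * (k-1) = k * (k-2) + k := by
    rw [Nat.mul_sub, Nat.mul_sub]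
    omega
  obtain ⟨c, hc1, hc2, hc3⟩ := exists_list_sum (k-2) k (T - k) (by omega)
  refine ⟨c.map (· + 1), by simp [hc1], ?_, ?_⟩
  · intro x hx
    obtain ⟨y, hy, rfl⟩ := List.mem_map.1 hx
    have := hc2 y hy
    omega
  · have : (c.map (· + 1)).sum = c.sum + c.length := by
      induction c with
      | nil => simp
      | cons a t iht => simp_all; omega
    rw [this, hc1, hc3]
    omega

lemma sum_zipWith (n : ℕ) : ∀ (r c : List ℕ), r.length = c.length →
    (List.zipWith (fun a b => a + n * b) r c).sum = r.sum + n * c.sum := by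
  intro r
  induction r with
  | nil =>
    intro c h
    have : c = [] := List.length_eq_zero_iff.1 h.symm
    subst this; simp
  | cons a t ih =>
    intro c h
    cases c with
    | nil => simp at h
    | cons b u =>
      simp only [List.zipWith_cons_cons, List.sum_cons, ih u (by simpa using h)]
      ring

lemma mem_zipWith_prop {α : Type*} (f : ℕ → ℕ → α) (pr : α → Prop) :
    ∀ (r c : List ℕ), (∀ a ∈ r, ∀ b ∈ c, pr (f a b)) →
      ∀ x ∈ List.zipWith f r c, pr x := by
  intro r
  induction r with
  | nil => intro c _ x hx; simp at hx
  | cons a t ih =>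
    intro c h x hx
    cases c with
    | nil => simp at hx
    | cons b u =>
      simp only [List.zipWith_cons_cons, List.mem_cons] at hx
      rcases hx with rfl | hx
      · exact h a (by simp) b (by simp)
      · exact ih u (fun a' ha' b' hb' => h a' (by simp [ha']) b' (by simp [hb'])) x hx


lemma evenoid_decomp {k : ℕ} (hk : 2 ≤ k) {W : ℕ} (hW1 : k ≤ W) (he : ¬ Oddoid k W) :
    ∃ T u, k ≤ T ∧ T ≤ k * (k-1) ∧ W = k * (k-1) * u + T := by
  have hn2 : 2 ≤ k * (k-1) := n_ge hk
  have hdm := Nat.div_add_mod W (k * (k-1))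
  have hρ : W % (k * (k-1)) = 0 ∨ k ≤ W % (k * (k-1)) := by
    by_contra h
    push_neg at h
    exact he ⟨by omega, by omega⟩
  have hρlt : W % (k * (k-1)) < k * (k-1) := Nat.mod_lt _ (by omega)
  have hkn : k ≤ k * (k-1) := by
    calc k = k * 1 := (mul_one k).symm
    _ ≤ k * (k-1) := Nat.mul_le_mul_left _ (by omega)
  rcases hρ with h0 | hρk
  · obtain ⟨q', hq'⟩ : ∃ q', W / (k * (k-1)) = q' + 1 := by
      rcases Nat.eq_zero_or_pos (W / (k * (k-1))) with h | h
      · exfalso; rw [h] at hdm; omega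
      · exact ⟨W / (k * (k-1)) - 1, by omega⟩
    rw [hq', Nat.mul_add, Nat.mul_one] at hdm
    exact ⟨k * (k-1), q', hkn, le_refl _, by omega⟩
  · exact ⟨W % (k * (k-1)), W / (k * (k-1)), hρk, by omega, by omega⟩

lemma exists_balanced_split {k : ℕ} (hk : 2 ≤ k) {W σ : ℕ} (hσ : 1 ≤ σ) (he : ¬ Oddoid k W)
    (hW1 : k ≤ W) (hW2 : W ≤ k ^ (σ+1) - k) :
    ∃ P : Multiset ℕ, Multiset.card P = k ∧ (∀ x ∈ P, 0 < x ∧ Oddoid k x ∧ x < k ^ σ) ∧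
      P.sum = W := by
  have hn2 : 2 ≤ k * (k-1) := n_ge hk
  obtain ⟨T, u, hT1, hT2, hWeq⟩ := evenoid_decomp hk hW1 he
  obtain ⟨B, hB⟩ := n_dvd_pow_sub hk hσ
  obtain ⟨v, hv⟩ := n_dvd_pow_sub hk (Nat.le_add_left 1 σ)
  have hkσ : k ≤ k ^ σ := Nat.le_self_pow (by omega) k
  have hkσ1 : k ≤ k ^ (σ+1) := Nat.le_self_pow (by omega) k
  have e1 : k * (k-1) * (k * B + 1) = k * (k-1) * v := by
    have h1 : k * (k-1) * (k*B+1) = k * (k*(k-1)*B + (k-1)) := by ring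
    rw [h1, ← hB, ← hv]
    have h2 : k ^ σ - k + (k-1) = k ^ σ - 1 := by omega
    rw [h2, Nat.mul_sub, mul_one]
    congr 1
    exact (pow_succ' k σ).symm
  have hveq : v = k * B + 1 := (Nat.eq_of_mul_eq_mul_left (by omega) e1).symm
  have huv : u < v := by
    have h1 : k * (k-1) * u < k * (k-1) * v := by omega
    exact lt_of_mul_lt_mul_left h1 (Nat.zero_le _)
  have hukB : u ≤ k * B := by omega
  obtain ⟨r, hr1, hr2, hr3⟩ := exists_residues hk hT1 hT2
  obtain ⟨c, hc1, hc2, hc3⟩ := exists_list_sum B k u hukB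
  refine ⟨↑(List.zipWith (fun a b => a + k * (k-1) * b) r c), ?_, ?_, ?_⟩
  · rw [Multiset.coe_card, List.length_zipWith, hr1, hc1, min_self]
  · intro x hx
    rw [Multiset.mem_coe] at hx
    refine mem_zipWith_prop _ (fun x => 0 < x ∧ Oddoid k x ∧ x < k ^ σ) r c ?_ x hx
    intro a ha b hb
    obtain ⟨ha1, ha2⟩ := hr2 a ha
    have hbB := hc2 b hb
    have hmod : (a + k * (k-1) * b) % (k * (k-1)) = a := by
      rw [mul_comm (k * (k-1)) b, Nat.add_mul_mod_self_right, Nat.mod_eq_of_lt (by omega)]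
    refine ⟨by omega, ⟨by omega, by omega⟩, ?_⟩
    have : k * (k-1) * b ≤ k * (k-1) * B := Nat.mul_le_mul_left _ hbB
    omega
  · rw [Multiset.sum_coe, sum_zipWith _ r c (by omega), hr3, hc3]
    omega

lemma exists_unbalanced_split {k : ℕ} (hk : 2 ≤ k) {W : ℕ} (he : ¬ Oddoid k W) (hW1 : k ≤ W) :
    ∃ P : Multiset ℕ, Multiset.card P = k ∧ (∀ x ∈ P, 0 < x ∧ Oddoid k x) ∧ P.sum = W ∧
      ∀ v : ℕ, k ≤ v → Multiset.card (P.filter (fun x => v ≤ x)) ≤ 1 := by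
  have hn2 : 2 ≤ k * (k-1) := n_ge hk
  obtain ⟨T, u, hT1, hT2, hWeq⟩ := evenoid_decomp hk hW1 he
  obtain ⟨r, hr1, hr2, hr3⟩ := exists_residues hk hT1 hT2
  obtain ⟨a, t, rfl⟩ : ∃ a t, r = a :: t := by
    cases r with
    | nil => simp at hr1; omega
    | cons a t => exact ⟨a, t, rfl⟩
  have ha := hr2 a (by simp)
  have hmod : (k * (k-1) * u + a) % (k * (k-1)) = a := by
    rw [Nat.mul_add_mod, Nat.mod_eq_of_lt (by omega)]
  have htsum : a + t.sum = T := by simpa using hr3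
  refine ⟨(k * (k-1) * u + a) ::ₘ (↑t : Multiset ℕ), ?_, ?_, ?_, ?_⟩
  · rw [Multiset.card_cons, Multiset.coe_card]
    simp at hr1
    omega
  · intro x hx
    rcases Multiset.mem_cons.1 hx with rfl | hx
    · exact ⟨by omega, by omega, by omega⟩
    · rw [Multiset.mem_coe] at hx
      obtain ⟨h1, h2⟩ := hr2 x (by simp [hx])
      exact ⟨by omega, oddoid_of_small hk h1 h2⟩
  · rw [Multiset.sum_cons, Multiset.sum_coe]
    omega
  · intro v hv
    rw [Multiset.filter_cons]
    have hft : Multiset.filter (fun x => v ≤ x) (↑t : Multiset ℕ) = 0 := by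
      rw [Multiset.filter_eq_nil]
      intro x hx
      rw [Multiset.mem_coe] at hx
      obtain ⟨h1, h2⟩ := hr2 x (by simp [hx])
      omega
    rw [hft]
    split <;> simp

end Splits

section Sorted

lemma sorted_getElem_le {l : List ℕ} (h : l.Pairwise (·≤·)) {i j : ℕ} (hij : i ≤ j)
    (hj : j < l.length) : l[i]'(lt_of_le_of_lt hij hj) ≤ l[j] := by
  rcases eq_or_lt_of_le hij with rfl | hlt
  · exact le_refl _
  · exact List.pairwise_iff_getElem.1 h i j (by omega) hj hlt

lemma length_filter_le_sorted {l : List ℕ} (h : l.Pairwise (·≤·)) {j : ℕ} (hj : j < l.length) :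
    j + 1 ≤ (l.filter (fun x => decide (x ≤ l[j]))).length := by
  have hsub := (List.take_sublist (j+1) l).filter (fun x => decide (x ≤ l[j]))
  have hall : (l.take (j+1)).filter (fun x => decide (x ≤ l[j])) = l.take (j+1) := by
    rw [List.filter_eq_self]
    intro x hx
    obtain ⟨i, hi, rfl⟩ := List.mem_iff_getElem.1 hx
    rw [List.getElem_take]
    simp only [decide_eq_true_eq]
    exact sorted_getElem_le h (by simp at hi; omega) hj
  have := hsub.length_le
  rw [hall, List.length_take] at this
  omega

lemma length_filter_ge_sorted {l : List ℕ} (h : l.Pairwise (·≤·)) {j : ℕ} (hj : j < l.length) :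
    l.length - j ≤ (l.filter (fun x => decide (l[j] ≤ x))).length := by
  have hsub := (List.drop_sublist j l).filter (fun x => decide (l[j] ≤ x))
  have hall : (l.drop j).filter (fun x => decide (l[j] ≤ x)) = l.drop j := by
    rw [List.filter_eq_self]
    intro x hx
    obtain ⟨i, hi, rfl⟩ := List.mem_iff_getElem.1 hx
    rw [List.getElem_drop]
    simp only [decide_eq_true_eq]
    exact sorted_getElem_le h (Nat.le_add_right _ _) (by simp at hi; omega)
  have := hsub.length_le
  rw [hall, List.length_drop] at this
  omega

end Sorted

section AVal

/-- the `(k-1)m+1`-st smallest entry. -/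
def aVal (k m : ℕ) (p : Multiset ℕ) : ℕ := (p.sort (· ≤ ·)).getD ((k-1)*m) 0

/-- minimal `s` with `aVal < k ^ s`. -/
def sExp (k m : ℕ) (p : Multiset ℕ) : ℕ := Nat.log k (aVal k m p) + 1

/-- the characterisation of P-positions. -/
def Good (k m : ℕ) (p : Multiset ℕ) : Prop :=
  ∀ x ∈ p, ¬ Oddoid k x → k ^ (sExp k m p) ≤ x

variable {k m : ℕ} (hk : 2 ≤ k) (hm : 1 ≤ m) {p : Multiset ℕ}
  (hcard : Multiset.card p = k * m)

lemma idx_lt (hk : 2 ≤ k) (hm : 1 ≤ m) : (k-1) * m < k * m := by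
  have : (k-1) * m < k * m ↔ (k-1) < k := Nat.mul_lt_mul_right (by omega)
  omega

include hcard hk hm

lemma aVal_eq_getElem :
    ∀ (h : (k-1) * m < (p.sort (· ≤ ·)).length), aVal k m p = (p.sort (· ≤ ·))[(k-1)*m] := by
  intro h
  exact List.getD_eq_getElem _ 0 h

lemma sort_length : (p.sort (· ≤ ·)).length = k * m := by
  rw [Multiset.length_sort, hcard]

lemma aVal_mem : aVal k m p ∈ p := by
  have hl : (k-1)*m < (p.sort (· ≤ ·)).length := by
    rw [sort_length hk hm hcard]; exact idx_lt hk hm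
  rw [aVal_eq_getElem hk hm hcard hl]
  rw [← Multiset.mem_sort (· ≤ ·)]
  exact List.getElem_mem _

lemma card_filter_gt_le :
    Multiset.card (p.filter (fun x => aVal k m p < x)) ≤ m - 1 := by
  have hl : (k-1)*m < (p.sort (· ≤ ·)).length := by
    rw [sort_length hk hm hcard]; exact idx_lt hk hm
  have h1 := length_filter_le_sorted (Multiset.pairwise_sort p (· ≤ ·)) hl
  have hsplit := Multiset.filter_add_not (fun x => aVal k m p < x) p
  have hcong : p.filter (fun x => ¬ aVal k m p < x) = p.filter (fun x => x ≤ aVal k m p) := by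
    apply Multiset.filter_congr
    intro x _
    constructor
    · intro h; omega
    · intro h; omega
  -- card of the ≤ part
  have h2 : (k-1)*m + 1 ≤ Multiset.card (p.filter (fun x => x ≤ aVal k m p)) := by
    have hrw : p.filter (fun x => x ≤ aVal k m p)
        = ((p.sort (· ≤ ·) : List ℕ) : Multiset ℕ).filter (fun x => x ≤ aVal k m p) := by
      rw [Multiset.sort_eq]
    rw [hrw, Multiset.filter_coe, Multiset.coe_card]
    rw [aVal_eq_getElem hk hm hcard hl]
    exact h1
  have hc := congrArg Multiset.card hsplit
  rw [Multiset.card_add, hcong] at hc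
  rw [hcard] at hc
  have hmul : (k-1) * m + m = k * m := by
    have : (k-1) * m + 1 * m = ((k-1) + 1) * m := (add_mul _ _ _).symm
    simp at this
    rw [this]
    congr 1
    omega
  omega

lemma card_filter_ge :
    m ≤ Multiset.card (p.filter (fun x => aVal k m p ≤ x)) := by
  have hl : (k-1)*m < (p.sort (· ≤ ·)).length := by
    rw [sort_length hk hm hcard]; exact idx_lt hk hm
  have h1 := length_filter_ge_sorted (Multiset.pairwise_sort p (· ≤ ·)) hl
  have hrw : p.filter (fun x => aVal k m p ≤ x)
      = ((p.sort (· ≤ ·) : List ℕ) : Multiset ℕ).filter (fun x => aVal k m p ≤ x) := by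
    rw [Multiset.sort_eq]
  rw [hrw, Multiset.filter_coe, Multiset.coe_card]
  rw [aVal_eq_getElem hk hm hcard hl]
  rw [sort_length hk hm hcard] at h1
  have hmul : (k-1) * m + m = k * m := by
    have : (k-1) * m + 1 * m = ((k-1) + 1) * m := (add_mul _ _ _).symm
    simp at this
    rw [this]
    congr 1
    omega
  omega

lemma aVal_lt_of_card_filter_le {v : ℕ}
    (h : Multiset.card (p.filter (fun x => v ≤ x)) ≤ m - 1) : aVal k m p < v := by
  by_contra hc
  push_neg at hc
  have hmono : p.filter (fun x => aVal k m p ≤ x) ≤ p.filter (fun x => v ≤ x) :=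
    Multiset.monotone_filter_right p (fun x hx => le_trans hc hx)
  have := Multiset.card_le_card hmono
  have := card_filter_ge hk hm hcard
  omega

end AVal

section Misc

lemma card_le_card_filter_join (pr : ℕ → Prop) [DecidablePred pr] (L : Multiset (Multiset ℕ))
    (h : ∀ P ∈ L, ∃ y ∈ P, pr y) :
    Multiset.card L ≤ Multiset.card ((L.join).filter pr) := by
  induction L using Multiset.induction_on with
  | empty => simp
  | cons P L ih =>
    rw [Multiset.join_cons, Multiset.filter_add, Multiset.card_add, Multiset.card_cons]
    obtain ⟨y, hy, hpy⟩ := h P (Multiset.mem_cons_self _ _)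
    have h1 : 1 ≤ Multiset.card (P.filter pr) := by
      rw [Nat.one_le_iff_ne_zero, ← Nat.pos_iff_ne_zero, Multiset.card_pos_iff_exists_mem]
      exact ⟨y, Multiset.mem_filter.2 ⟨hy, hpy⟩⟩
    have h2 := ih (fun Q hQ => h Q (Multiset.mem_cons_of_mem hQ))
    omega

lemma card_filter_join_le (pr : ℕ → Prop) [DecidablePred pr] (L : Multiset (Multiset ℕ))
    (h : ∀ P ∈ L, Multiset.card (P.filter pr) ≤ 1) :
    Multiset.card ((L.join).filter pr) ≤ Multiset.card L := by
  induction L using Multiset.induction_on with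
  | empty => simp
  | cons P L ih =>
    rw [Multiset.join_cons, Multiset.filter_add, Multiset.card_add, Multiset.card_cons]
    have h1 := h P (Multiset.mem_cons_self _ _)
    have h2 := ih (fun Q hQ => h Q (Multiset.mem_cons_of_mem hQ))
    omega

lemma exists_not_of_card_filter_lt (pr : ℕ → Prop) [DecidablePred pr] (S : Multiset ℕ)
    (h : Multiset.card (S.filter pr) < Multiset.card S) : ∃ x ∈ S, ¬ pr x := by
  by_contra hc
  push_neg at hc
  rw [Multiset.filter_eq_self.2 hc] at h
  omega

lemma mem_lt_sum {P : Multiset ℕ} {x : ℕ} (hx : x ∈ P) (hc : 2 ≤ Multiset.card P)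
    (hpos : ∀ y ∈ P, 0 < y) : x < P.sum := by
  obtain ⟨T, rfl⟩ := Multiset.exists_cons_of_mem hx
  rw [Multiset.sum_cons]
  have : 0 < T.sum := by
    rw [Multiset.card_cons] at hc
    obtain ⟨y, hy⟩ := (Multiset.card_pos_iff_exists_mem (s := T)).1 (by omega)
    have := hpos y (Multiset.mem_cons_of_mem hy)
    have := Multiset.single_le_sum (fun z _ => Nat.zero_le z) y hy
    omega
  omega

lemma card_join_eq {k m : ℕ} (L : Multiset (Multiset ℕ)) (hL : Multiset.card L = m)
    (h : ∀ P ∈ L, Multiset.card P = k) : Multiset.card L.join = k * m := by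
  rw [Multiset.card_join]
  have : L.map Multiset.card = L.map (fun _ => k) := Multiset.map_congr rfl h
  rw [this, Multiset.map_const', Multiset.sum_replicate, hL, smul_eq_mul, mul_comm]

end Misc

section Exps

variable {k m : ℕ} (hk : 2 ≤ k) {p : Multiset ℕ}

include hk

lemma aVal_lt_pow_sExp : aVal k m p < k ^ (sExp k m p) :=
  Nat.lt_pow_succ_log_self (by omega) _

lemma pow_pred_le_aVal (ha : 1 ≤ aVal k m p) : k ^ (sExp k m p - 1) ≤ aVal k m p := by
  unfold sExp
  rw [Nat.add_sub_cancel]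
  exact Nat.pow_log_le_self k (by omega)

lemma sExp_le_of_lt_pow {t : ℕ} (ha : 1 ≤ aVal k m p) (h : aVal k m p < k ^ t) :
    sExp k m p ≤ t := by
  have := Nat.log_lt_of_lt_pow (by omega : aVal k m p ≠ 0) h
  unfold sExp
  omega

lemma two_le_sExp (ha : k ≤ aVal k m p) : 2 ≤ sExp k m p := by
  have h1 : k ^ 1 ≤ aVal k m p := by simpa using ha
  have h2 := (Nat.le_log_iff_pow_le (by omega) (by omega : aVal k m p ≠ 0)).2 h1
  unfold sExp
  omega

end Exps

section DirI

variable {k m : ℕ}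

lemma good_move_not_good (hk : 2 ≤ k) (hm : 1 ≤ m) {p q : Multiset ℕ}
    (hcard : Multiset.card p = k * m) (hpos : ∀ x ∈ p, 0 < x)
    (hg : Good k m p) (hmv : KDelMove k m p q) : ¬ Good k m q := by
  obtain ⟨d, L, hd, hL, hPk, hpe, rfl⟩ := hmv
  intro hgq
  have hqcard : Multiset.card L.join = k * m := by
    rw [card_join_eq L hL (fun P hP => (hPk P hP).1)]
  have hqpos : ∀ x ∈ L.join, 0 < x := by
    intro x hx
    obtain ⟨P, hP, hxP⟩ := Multiset.mem_join.1 hx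
    exact (hPk P hP).2 x hxP
  have hsub : L.map Multiset.sum ≤ p := by
    rw [hpe]; exact Multiset.le_add_left _ _
  have ha1 : 1 ≤ aVal k m p := hpos _ (aVal_mem hk hm hcard)
  have hqa1 : 1 ≤ aVal k m L.join := hqpos _ (aVal_mem hk hm hqcard)
  have halt : aVal k m p < k ^ (sExp k m p) := aVal_lt_pow_sExp hk
  have hqalt : aVal k m L.join < k ^ (sExp k m L.join) := aVal_lt_pow_sExp hk
  have key : ∀ P ∈ L, ∃ y ∈ P, aVal k m L.join < y := by
    intro P hP
    obtain ⟨hPc, hPp⟩ := hPk P hP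
    have hsumP : P.sum ∈ p := Multiset.mem_of_le hsub (Multiset.mem_map_of_mem _ hP)
    by_cases ho : Oddoid k P.sum
    · obtain ⟨y, hy, hye⟩ : ∃ y ∈ P, ¬ Oddoid k y := by
        by_contra hall
        push_neg at hall
        exact sum_oddoid_evenoid hk hPc hall ho
      have h1 := hgq y (Multiset.mem_join.2 ⟨P, hP, hy⟩) hye
      exact ⟨y, hy, by omega⟩
    · by_contra hno
      push_neg at hno
      have hsle : P.sum ≤ k * aVal k m L.join := by
        have := Multiset.sum_le_card_nsmul P (aVal k m L.join) hno
        rw [hPc, smul_eq_mul] at this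
        exact this
      have hks : k ^ (sExp k m p) ≤ P.sum := hg _ hsumP ho
      have hs1 : 1 ≤ sExp k m p := by unfold sExp; omega
      have hpow : k ^ (sExp k m p) = k * k ^ (sExp k m p - 1) := by
        conv_lhs => rw [show sExp k m p = (sExp k m p - 1) + 1 by omega]
        rw [pow_succ, mul_comm]
      have ha'ge : k ^ (sExp k m p - 1) ≤ aVal k m L.join := by
        have hmm : k * k ^ (sExp k m p - 1) ≤ k * aVal k m L.join := by omega
        exact Nat.le_of_mul_le_mul_left hmm (by omega)
      have hs's : sExp k m p ≤ sExp k m L.join := by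
        have h2 : k ^ (sExp k m p - 1) < k ^ (sExp k m L.join) := by omega
        have := (Nat.pow_lt_pow_iff_right (by omega : 1 < k)).1 h2
        omega
      -- find a small heap
      obtain ⟨x0, hx0mem, hx0le⟩ : ∃ x0 ∈ L.map Multiset.sum, ¬ aVal k m p < x0 := by
        refine exists_not_of_card_filter_lt (fun x => aVal k m p < x) _ ?_
        have hle := Multiset.card_le_card
          (Multiset.filter_le_filter (fun x => aVal k m p < x) hsub)
        have hfl := card_filter_gt_le hk hm hcard
        rw [Multiset.card_map, hL]
        omega
      push_neg at hx0le
      obtain ⟨P0, hP0, hx0eq⟩ := Multiset.mem_map.1 hx0mem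
      obtain ⟨hP0c, hP0p⟩ := hPk P0 hP0
      have hP0mem : P0.sum ∈ p := Multiset.mem_of_le hsub (Multiset.mem_map_of_mem _ hP0)
      have hP0odd : Oddoid k P0.sum := by
        by_contra hcon
        have := hg _ hP0mem hcon
        omega
      obtain ⟨y0, hy0, hy0e⟩ : ∃ y0 ∈ P0, ¬ Oddoid k y0 := by
        by_contra hall
        push_neg at hall
        exact sum_oddoid_evenoid hk hP0c hall hP0odd
      have h1 := hgq y0 (Multiset.mem_join.2 ⟨P0, hP0, hy0⟩) hy0e
      have h2 : y0 < P0.sum := mem_lt_sum hy0 (by omega) hP0p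
      have h3 : k ^ (sExp k m p) ≤ k ^ (sExp k m L.join) :=
        Nat.pow_le_pow_right (by omega) hs's
      omega
  have hcount := card_le_card_filter_join (fun x => aVal k m L.join < x) L key
  have hbound := card_filter_gt_le hk hm hqcard
  rw [hL] at hcount
  omega

end DirI

section DirII

variable {k m : ℕ}

/-- splitting of a kept heap `y ≥ k^c` into `k` parts, all positive, every evenoid
part at least `k^c`, and at most one part at least `k^c`. -/
lemma split_X (hk : 2 ≤ k) {c y : ℕ} (hc : 1 ≤ c) (hy : k ^ c ≤ y) :
    ∃ P : Multiset ℕ, Multiset.card P = k ∧ (∀ x ∈ P, 0 < x) ∧ P.sum = y ∧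
      (∀ x ∈ P, ¬ Oddoid k x → k ^ c ≤ x) ∧
      Multiset.card (P.filter (fun x => k ^ c ≤ x)) ≤ 1 := by
  have hkc : k ≤ k ^ c := Nat.le_self_pow (by omega) k
  by_cases ho : Oddoid k y
  · have hgap : k ^ c + (k-1) ≤ y := oddoid_pow_gap hk hc ho hy
    refine ⟨(y - (k-1)) ::ₘ Multiset.replicate (k-1) 1, ?_, ?_, ?_, ?_, ?_⟩
    · rw [Multiset.card_cons, Multiset.card_replicate]; omega
    · intro x hx
      rcases Multiset.mem_cons.1 hx with rfl | hx
      · omega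
      · rw [Multiset.eq_of_mem_replicate hx]; omega
    · rw [Multiset.sum_cons, Multiset.sum_replicate, smul_eq_mul, mul_one]; omega
    · intro x hx hxe
      rcases Multiset.mem_cons.1 hx with rfl | hx
      · omega
      · exfalso
        rw [Multiset.eq_of_mem_replicate hx] at hxe
        exact hxe (oddoid_of_small hk (le_refl 1) (by omega))
    · rw [Multiset.filter_cons]
      have hrep : Multiset.filter (fun x => k ^ c ≤ x) (Multiset.replicate (k-1) 1) = 0 := by
        rw [Multiset.filter_eq_nil]
        intro x hx
        rw [Multiset.eq_of_mem_replicate hx]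
        omega
      rw [hrep]
      split <;> simp
  · obtain ⟨P, h1, h2, h3, h4⟩ := exists_unbalanced_split hk ho (by omega)
    exact ⟨P, h1, fun x hx => (h2 x hx).1, h3,
      fun x hx hxe => absurd (h2 x hx).2 hxe, h4 _ hkc⟩

lemma not_good_exists_move (hk : 2 ≤ k) (hm : 1 ≤ m) {p : Multiset ℕ}
    (hcard : Multiset.card p = k * m) (hpos : ∀ x ∈ p, 0 < x)
    (hng : ¬ Good k m p) : ∃ q, KDelMove k m p q ∧ Good k m q := by
  obtain ⟨w, hw, hwe, hwlt⟩ : ∃ w ∈ p, ¬ Oddoid k w ∧ w < k ^ (sExp k m p) := by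
    unfold Good at hng
    push_neg at hng
    obtain ⟨w, hw, h1, h2⟩ := hng
    exact ⟨w, hw, h1, by omega⟩
  have ha1 : 1 ≤ aVal k m p := hpos _ (aVal_mem hk hm hcard)
  have hwk : k ≤ w := evenoid_ge hk (hpos w hw) hwe
  -- a ≥ k
  have hak : k ≤ aVal k m p := by
    by_contra hcon
    push_neg at hcon
    apply hng
    intro x hx hxe
    have hxk := evenoid_ge hk (hpos x hx) hxe
    have hlog : Nat.log k (aVal k m p) = 0 := Nat.log_of_lt hcon
    unfold sExp
    rw [hlog]
    simpa using hxk
  have hs2 : 2 ≤ sExp k m p := two_le_sExp hk hak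
  set s := sExp k m p with hsdef
  have hwle : w ≤ k ^ s - k := evenoid_le_pow_sub hk (by omega) (hpos w hw) hwe hwlt
  have hsplitW := exists_balanced_split hk (σ := s - 1) (by omega) hwe hwk
    (by rw [show s - 1 + 1 = s by omega]; exact hwle)
  obtain ⟨PW, hPWc, hPWel, hPWsum⟩ := hsplitW
  -- choose the other kept heaps
  set F := (p.erase w).filter (fun x => aVal k m p ≤ x) with hFdef
  have hFcard : m - 1 ≤ Multiset.card F := by
    have hsplit : p.filter (fun x => aVal k m p ≤ x)
        = (w ::ₘ (p.erase w)).filter (fun x => aVal k m p ≤ x) := by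
      rw [Multiset.cons_erase hw]
    have h1 := card_filter_ge hk hm hcard
    rw [hsplit, Multiset.filter_cons] at h1
    rw [Multiset.card_add] at h1
    rw [← hFdef] at h1
    have h2 : Multiset.card (if aVal k m p ≤ w then ({w} : Multiset ℕ) else 0) ≤ 1 := by
      split <;> simp
    omega
  set X : Multiset ℕ := ↑(F.toList.take (m-1)) with hXdef
  have hXle : X ≤ F := by
    have h1 : List.Subperm (F.toList.take (m-1)) F.toList := (List.take_sublist _ _).subperm
    have h2 : (↑(F.toList.take (m-1)) : Multiset ℕ) ≤ ↑F.toList := h1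
    rwa [Multiset.coe_toList] at h2
  have hXcard : Multiset.card X = m - 1 := by
    rw [hXdef, Multiset.coe_card, List.length_take, Multiset.length_toList]
    omega
  have hXprop : ∀ y ∈ X, aVal k m p ≤ y ∧ y ∈ p.erase w := by
    intro y hy
    have := Multiset.mem_of_le hXle hy
    rw [hFdef, Multiset.mem_filter] at this
    exact ⟨this.2, this.1⟩
  have hXpow : ∀ y ∈ X, k ^ (s-1) ≤ y := by
    intro y hy
    have h1 := (hXprop y hy).1
    have h2 := pow_pred_le_aVal (m := m) hk (p := p) (by omega)
    rw [← hsdef] at h2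
    omega
  -- the splitting function
  have hsplitfn : ∀ y : ℕ, ∃ P : Multiset ℕ, k ^ (s-1) ≤ y →
      (Multiset.card P = k ∧ (∀ x ∈ P, 0 < x) ∧ P.sum = y ∧
       (∀ x ∈ P, ¬ Oddoid k x → k ^ (s-1) ≤ x) ∧
       Multiset.card (P.filter (fun x => k ^ (s-1) ≤ x)) ≤ 1) := by
    intro y
    by_cases h : k ^ (s-1) ≤ y
    · obtain ⟨P, hP⟩ := split_X hk (c := s-1) (by omega) h
      exact ⟨P, fun _ => hP⟩
    · exact ⟨0, fun hy => absurd hy h⟩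
  choose f hf using hsplitfn
  set L : Multiset (Multiset ℕ) := PW ::ₘ X.map f with hLdef
  set K : Multiset ℕ := w ::ₘ X with hKdef
  have hKle : K ≤ p := by
    rw [hKdef, ← Multiset.cons_erase hw]
    exact Multiset.cons_le_cons _ (le_trans hXle (Multiset.filter_le _ _))
  have hKcard : Multiset.card K = m := by
    rw [hKdef, Multiset.card_cons, hXcard]; omega
  have hmapL : L.map Multiset.sum = K := by
    rw [hLdef, hKdef, Multiset.map_cons, hPWsum, Multiset.map_map]
    congr 1
    have : ∀ y ∈ X, (Multiset.sum ∘ f) y = id y := by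
      intro y hy
      exact ((hf y (hXpow y hy)).2.2).1
    rw [Multiset.map_congr rfl this, Multiset.map_id]
  have hmul : (k-1) * m + m = k * m := by
    have h : (k-1) * m + 1 * m = ((k-1) + 1) * m := (add_mul _ _ _).symm
    simp at h
    rw [h]
    congr 1
    omega
  refine ⟨L.join, ⟨p - K, L, ?_, ?_, ?_, ?_, rfl⟩, ?_⟩
  · -- card of d
    rw [Multiset.card_sub hKle, hcard, hKcard]
    omega
  · rw [hLdef, Multiset.card_cons, Multiset.card_map, hXcard]; omega
  · -- part conditions
    intro P hP
    rcases Multiset.mem_cons.1 hP with rfl | hP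
    · exact ⟨hPWc, fun x hx => (hPWel x hx).1⟩
    · obtain ⟨y, hy, rfl⟩ := Multiset.mem_map.1 hP
      have h := hf y (hXpow y hy)
      exact ⟨h.1, h.2.1⟩
  · rw [hmapL, tsub_add_cancel_of_le hKle]
  · -- Goodness of the new position
    have hLcard : Multiset.card L = m := by
      rw [hLdef, Multiset.card_cons, Multiset.card_map, hXcard]; omega
    have hallk : ∀ P ∈ L, Multiset.card P = k := by
      intro P hP
      rcases Multiset.mem_cons.1 hP with rfl | hP
      · exact hPWc
      · obtain ⟨y, hy, rfl⟩ := Multiset.mem_map.1 hP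
        exact (hf y (hXpow y hy)).1
    have hqcard : Multiset.card L.join = k * m := card_join_eq L hLcard hallk
    -- at most m-1 elements are ≥ k^(s-1)
    have hbudget : Multiset.card (L.join.filter (fun x => k ^ (s-1) ≤ x)) ≤ m - 1 := by
      rw [hLdef, Multiset.join_cons, Multiset.filter_add, Multiset.card_add]
      have h0 : Multiset.filter (fun x => k ^ (s-1) ≤ x) PW = 0 := by
        rw [Multiset.filter_eq_nil]
        intro x hx
        have := (hPWel x hx).2.2
        omega
      rw [h0]
      have h1 := card_filter_join_le (fun x => k ^ (s-1) ≤ x) (X.map f) (by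
        intro P hP
        obtain ⟨y, hy, rfl⟩ := Multiset.mem_map.1 hP
        exact (hf y (hXpow y hy)).2.2.2.2)
      rw [Multiset.card_map, hXcard] at h1
      simpa using h1
    have ha'lt : aVal k m L.join < k ^ (s-1) := aVal_lt_of_card_filter_le hk hm hqcard hbudget
    have hqpos : ∀ x ∈ L.join, 0 < x := by
      intro x hx
      obtain ⟨P, hP, hxP⟩ := Multiset.mem_join.1 hx
      rcases Multiset.mem_cons.1 hP with rfl | hP
      · exact (hPWel x hxP).1
      · obtain ⟨y, hy, rfl⟩ := Multiset.mem_map.1 hP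
        exact (hf y (hXpow y hy)).2.1 x hxP
    have hq1 : 1 ≤ aVal k m L.join := hqpos _ (aVal_mem hk hm hqcard)
    have hsle : sExp k m L.join ≤ s - 1 := sExp_le_of_lt_pow hk hq1 ha'lt
    intro x hx hxe
    have hpowle : k ^ (sExp k m L.join) ≤ k ^ (s-1) := Nat.pow_le_pow_right (by omega) hsle
    obtain ⟨P, hP, hxP⟩ := Multiset.mem_join.1 hx
    rcases Multiset.mem_cons.1 hP with rfl | hP
    · exact absurd (hPWel x hxP).2.1 hxe
    · obtain ⟨y, hy, rfl⟩ := Multiset.mem_map.1 hP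
      have := (hf y (hXpow y hy)).2.2.2.1 x hxP hxe
      omega

end DirII

section Main

variable {k m : ℕ}

lemma sum_join_eq (L : Multiset (Multiset ℕ)) : L.join.sum = (L.map Multiset.sum).sum := by
  induction L using Multiset.induction_on with
  | empty => simp
  | cons P L ih => rw [Multiset.join_cons, Multiset.sum_add, Multiset.map_cons,
      Multiset.sum_cons, ih]

lemma move_facts (hk : 2 ≤ k) (hm : 1 ≤ m) {p q : Multiset ℕ}
    (hcard : Multiset.card p = k * m) (hpos : ∀ x ∈ p, 0 < x) (hmv : KDelMove k m p q) :
    Multiset.card q = k * m ∧ (∀ x ∈ q, 0 < x) ∧ q.sum < p.sum := by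
  obtain ⟨d, L, hd, hL, hPk, hpe, rfl⟩ := hmv
  refine ⟨card_join_eq L hL (fun P hP => (hPk P hP).1), ?_, ?_⟩
  · intro x hx
    obtain ⟨P, hP, hxP⟩ := Multiset.mem_join.1 hx
    exact (hPk P hP).2 x hxP
  · have hsump : p.sum = d.sum + (L.map Multiset.sum).sum := by rw [hpe, Multiset.sum_add]
    have hdpos : 0 < d.sum := by
      have hdc : 0 < Multiset.card d := by
        rw [hd]
        have : 1 * 1 ≤ (k-1) * m := Nat.mul_le_mul (by omega) hm
        omega
      obtain ⟨x, hx⟩ := (Multiset.card_pos_iff_exists_mem (s := d)).1 hdc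
      have hxp : x ∈ p := by
        rw [hpe]
        exact Multiset.mem_of_le (Multiset.le_add_right _ _) hx
      have := hpos x hxp
      have := Multiset.single_le_sum (fun y (_ : y ∈ d) => Nat.zero_le y) x hx
      omega
    rw [sum_join_eq]
    omega

lemma npos_ppos_false {α : Type*} {M : α → α → Prop} :
    ∀ {p : α}, NPos M p → PPos M p → False := by
  intro p hn
  induction hn with
  | @intro p q hpq hq ih =>
    intro hp
    cases hp _ hpq with
    | @intro q' r hqr hr => exact ih _ hqr hr

lemma main_ind (hk : 2 ≤ k) (hm : 1 ≤ m) :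
    ∀ (N : ℕ) (p : Multiset ℕ), Multiset.card p = k * m → (∀ x ∈ p, 0 < x) → p.sum ≤ N →
      ((Good k m p → PPos (KDelMove k m) p) ∧ (¬ Good k m p → NPos (KDelMove k m) p)) := by
  intro N
  induction N with
  | zero =>
    intro p hc hp hs
    exfalso
    have hcp : 0 < Multiset.card p := by
      rw [hc]
      have : 1 * 1 ≤ k * m := Nat.mul_le_mul (by omega) hm
      omega
    obtain ⟨x, hx⟩ := (Multiset.card_pos_iff_exists_mem (s := p)).1 hcp
    have := hp x hx
    have := Multiset.single_le_sum (fun y (_ : y ∈ p) => Nat.zero_le y) x hx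
    omega
  | succ N ih =>
    intro p hc hp hs
    constructor
    · intro hg q hmv
      obtain ⟨hqc, hqp, hqs⟩ := move_facts hk hm hc hp hmv
      exact (ih q hqc hqp (by omega)).2 (good_move_not_good hk hm hc hp hg hmv)
    · intro hng
      obtain ⟨q, hmv, hgq⟩ := not_good_exists_move hk hm hc hp hng
      obtain ⟨hqc, hqp, hqs⟩ := move_facts hk hm hc hp hmv
      exact NPos.intro hmv ((ih q hqc hqp (by omega)).1 hgq)

lemma ppos_iff_good (hk : 2 ≤ k) (hm : 1 ≤ m) {p : Multiset ℕ}
    (hcard : Multiset.card p = k * m) (hpos : ∀ x ∈ p, 0 < x) :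
    PPos (KDelMove k m) p ↔ Good k m p := by
  obtain ⟨h1, h2⟩ := main_ind hk hm p.sum p hcard hpos (le_refl _)
  constructor
  · intro hP
    by_contra hng
    exact npos_ppos_false (h2 hng) hP
  · exact h1

end Main

end DelNim

/-- `(k-1)/k·n`-delete Nim: the sorted position `z₁ ≤ … ≤ z_{km}` (zero-indexed,
so `z_{(k-1)m+1}` is `z ⟨(k-1)*m, _⟩`) is a `P`-position iff
(a) `z₁, …, z_{(k-1)m+1}` are all `k`-oddoid, and (b) every `k`-evenoid `z_l`
satisfies `k^s ≤ z_l`, where `k^s` is the smallest power of `k` strictly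
greater than `z_{(k-1)m+1}`. -/
theorem stmt16 (k m : ℕ) (hk : 2 ≤ k) (hm : 1 ≤ m) (z : Fin (k * m) → ℕ)
    (hpos : ∀ i, 0 < z i) (hmono : Monotone z)
    (hidx : (k - 1) * m < k * m) (s : ℕ)
    (hs : z ⟨(k - 1) * m, hidx⟩ < k ^ s)
    (hsmin : ∀ t, z ⟨(k - 1) * m, hidx⟩ < k ^ t → s ≤ t) :
    PPos (KDelMove k m) (Finset.univ.val.map z) ↔
      ((∀ i : Fin (k * m), (i : ℕ) ≤ (k - 1) * m → Oddoid k (z i)) ∧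
       ∀ i : Fin (k * m), ¬ Oddoid k (z i) → k ^ s ≤ z i) := by
  set p₀ := Finset.univ.val.map z with hp0
  have hc : Multiset.card p₀ = k * m := by simp [hp0]
  have hpos₀ : ∀ x ∈ p₀, 0 < x := by
    intro x hx
    obtain ⟨i, _, rfl⟩ := Multiset.mem_map.1 hx
    exact hpos i
  have hmem : ∀ i : Fin (k * m), z i ∈ p₀ := fun i =>
    Multiset.mem_map.2 ⟨i, Finset.mem_univ_val i, rfl⟩
  have hofn : p₀ = ↑(List.ofFn z) := by rw [hp0, Fin.univ_val_map]
  have hsorted : (List.ofFn z).Pairwise (· ≤ ·) := (List.sortedLE_ofFn_iff.2 hmono).pairwise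
  have hsort : p₀.sort (· ≤ ·) = List.ofFn z := by
    apply List.Perm.eq_of_sortedLE (Multiset.pairwise_sort _ _).sortedLE hsorted.sortedLE
    rw [← Multiset.coe_eq_coe, Multiset.sort_eq, hofn]
  have hlen : (k-1)*m < (List.ofFn z).length := by simpa using hidx
  have haz : DelNim.aVal k m p₀ = z ⟨(k-1)*m, hidx⟩ := by
    unfold DelNim.aVal
    rw [hsort, List.getD_eq_getElem _ 0 hlen, List.getElem_ofFn]
  have ha1 : 1 ≤ DelNim.aVal k m p₀ := by rw [haz]; exact hpos _
  have hseq : s = DelNim.sExp k m p₀ := by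
    have h1 : DelNim.sExp k m p₀ ≤ s := DelNim.sExp_le_of_lt_pow hk ha1 (by rw [haz]; exact hs)
    have h2 : s ≤ DelNim.sExp k m p₀ := hsmin _ (by rw [← haz]; exact DelNim.aVal_lt_pow_sExp hk)
    omega
  rw [DelNim.ppos_iff_good hk hm hc hpos₀]
  constructor
  · intro hg
    constructor
    · intro i hi
      by_contra he
      have h1 := hg (z i) (hmem i) he
      have h2 : z i ≤ z ⟨(k-1)*m, hidx⟩ := hmono (by rw [Fin.le_def]; exact hi)
      rw [← hseq] at h1
      omega
    · intro i he
      have h1 := hg (z i) (hmem i) he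
      rwa [← hseq] at h1
  · rintro ⟨hA, hB⟩ x hx hxe
    obtain ⟨i, _, rfl⟩ := Multiset.mem_map.1 hx
    rw [← hseq]
    exact hB i hxe
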